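/- For every integer n ≥ 3, the sun graph S_n satisfies ζ(S_n) = n(n − 1)/2 + n(n − 3) = n(3n − 7)/2 (the count n(n−1)/2 coming from pairs of the n pairwise differently colored outer vertices, and n(n−3) from pairs of an outer vertex with the n − 3 clique vertices it is neither adjacent to nor shares a color with). -/

import Mathlib

open SimpleGraph

/-- A proper vertex colouring of `G` using exactly `χ(G)` colours. -/
def IsChromaticColoring {V : Type*} (G : SimpleGraph V) (c : V → ℕ) : Prop :=
  (∀ u v, G.Adj u v → c u ≠ c v) ∧ ((Set.range c).ncard : ℕ∞) = G.chromaticNumber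

/-- The set of chromatic completion edges for a colouring `c`: unordered pairs of
distinct non-adjacent vertices with different colours. -/
def completionEdges {V : Type*} (G : SimpleGraph V) (c : V → ℕ) : Set (Sym2 V) :=
  {e | ∃ u v, e = s(u, v) ∧ u ≠ v ∧ ¬ G.Adj u v ∧ c u ≠ c v}

/-- The chromatic completion number `ζ(G)`. -/
noncomputable def zeta {V : Type*} (G : SimpleGraph V) : ℕ :=
  sSup {m | ∃ c : V → ℕ, IsChromaticColoring G c ∧ m = (completionEdges G c).ncard}

/-- The sun graph `S_n`: the complete graph `K_n` on the `inl` vertices, together with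
outer vertices `inr i` adjacent exactly to `inl i` and `inl (i+1)` (indices mod `n`). -/
def sunGraph (n : ℕ) : SimpleGraph (Fin n ⊕ Fin n) where
  Adj u v := match u, v with
    | Sum.inl a, Sum.inl b => a ≠ b
    | Sum.inl a, Sum.inr i => (a : ℕ) = (i : ℕ) ∨ (a : ℕ) = ((i : ℕ) + 1) % n
    | Sum.inr i, Sum.inl b => (b : ℕ) = (i : ℕ) ∨ (b : ℕ) = ((i : ℕ) + 1) % n
    | Sum.inr _, Sum.inr _ => False
  symm := by
    constructor
    intro u v h
    cases u <;> cases v <;> simp_all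
    exact fun hba => h hba.symm
  loopless := by
    constructor
    intro u h
    cases u with
    | inl a => exact h rfl
    | inr i => exact h

section SunAux

open Finset

variable {n : ℕ}

instance (n : ℕ) : DecidableRel (sunGraph n).Adj := fun u v =>
  match u, v with
  | Sum.inl a, Sum.inl b => inferInstanceAs (Decidable (a ≠ b))
  | Sum.inl _, Sum.inr _ => inferInstanceAs (Decidable (_ ∨ _))
  | Sum.inr _, Sum.inl _ => inferInstanceAs (Decidable (_ ∨ _))
  | Sum.inr _, Sum.inr _ => inferInstanceAs (Decidable False)

/-- The completion graph: edges are exactly the completion edges. -/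
def Hg (n : ℕ) (c : Fin n ⊕ Fin n → ℕ) : SimpleGraph (Fin n ⊕ Fin n) where
  Adj u v := u ≠ v ∧ ¬ (sunGraph n).Adj u v ∧ c u ≠ c v
  symm := ⟨fun u v ⟨h1, h2, h3⟩ => ⟨h1.symm, fun h => h2 h.symm, h3.symm⟩⟩
  loopless := ⟨fun u h => h.1 rfl⟩

instance (n : ℕ) (c : Fin n ⊕ Fin n → ℕ) : DecidableRel (Hg n c).Adj :=
  fun _ _ => inferInstanceAs (Decidable (_ ∧ _ ∧ _))

lemma completionEdges_eq (c : Fin n ⊕ Fin n → ℕ) :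
    completionEdges (sunGraph n) c = (Hg n c).edgeSet := by
  ext e
  induction e using Sym2.ind with
  | _ u v =>
    constructor
    · rintro ⟨a, b, he, h1, h2, h3⟩
      rw [Sym2.eq_iff] at he
      rcases he with ⟨rfl, rfl⟩ | ⟨rfl, rfl⟩
      · exact ⟨h1, h2, h3⟩
      · exact ⟨h1.symm, fun h => h2 h.symm, h3.symm⟩
    · rintro ⟨h1, h2, h3⟩
      exact ⟨u, v, rfl, h1, h2, h3⟩

lemma completionEdges_ncard (c : Fin n ⊕ Fin n → ℕ) :
    (completionEdges (sunGraph n) c).ncard = (Hg n c).edgeFinset.card := by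
  rw [completionEdges_eq, ← Set.ncard_coe_finset, coe_edgeFinset]

lemma mod_ne_mod {n a b : ℕ} (hab : a < b) (hbn : b - a < n) : a % n ≠ b % n := by
  intro h
  have h1 := (Nat.modEq_iff_dvd' hab.le).mp h
  have h2 := Nat.le_of_dvd (by omega) h1
  omega


/-- the optimal colouring -/
def c0 (n : ℕ) : Fin n ⊕ Fin n → ℕ
  | Sum.inl a => a
  | Sum.inr i => ((i : ℕ) + 2) % n

lemma c0_proper {n : ℕ} (hn : 3 ≤ n) :
    ∀ u v, (sunGraph n).Adj u v → c0 n u ≠ c0 n v := by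
  rintro (a|i) (b|j) hadj
  · exact fun h => hadj (Fin.val_injective h)
  · rcases hadj with h|h <;> simp only [c0] <;> rw [h]
    · conv_lhs => rw [← Nat.mod_eq_of_lt j.2]
      exact mod_ne_mod (by omega) (by omega)
    · exact mod_ne_mod (by omega) (by omega)
  · rcases hadj with h|h <;> simp only [c0] <;> rw [h]
    · conv_rhs => rw [← Nat.mod_eq_of_lt i.2]
      exact (mod_ne_mod (by omega) (by omega)).symm
    · exact (mod_ne_mod (by omega) (by omega)).symm
  · exact absurd hadj id

lemma sun_chromaticNumber {n : ℕ} (hn : 3 ≤ n) :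
    (sunGraph n).chromaticNumber = n := by
  apply le_antisymm
  · have : (sunGraph n).Colorable n := by
      refine ⟨⟨fun v => ⟨c0 n v, ?_⟩, ?_⟩⟩
      · cases v with
        | inl a => exact a.2
        | inr i => exact Nat.mod_lt _ (by omega)
      · intro u v h
        simp only [top_adj, ne_eq, Fin.mk.injEq]
        exact c0_proper hn u v h
    simpa using this.chromaticNumber_le
  · have e : (⊤ : SimpleGraph (Fin n)) ↪g sunGraph n := by
      refine ⟨⟨Sum.inl, fun a b h => by simpa using h⟩, ?_⟩
      intro a b
      simp [sunGraph]
      exact Iff.rfl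
    have := chromaticNumber_mono_of_hom e.toHom
    simpa [chromaticNumber_top] using this

variable {c : Fin n ⊕ Fin n → ℕ}

lemma cInl_inj (hc : IsChromaticColoring (sunGraph n) c) :
    Function.Injective (fun a : Fin n => c (Sum.inl a)) := by
  intro a b h
  by_contra hne
  exact hc.1 _ _ (show (sunGraph n).Adj (Sum.inl a) (Sum.inl b) from hne) h

lemma exists_inl_color (hn : 3 ≤ n) (hc : IsChromaticColoring (sunGraph n) c)
    (v : Fin n ⊕ Fin n) : ∃ k : Fin n, c v = c (Sum.inl k) := by
  have hrange : (Set.range c).ncard = n := by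
    have h2 := hc.2
    rw [sun_chromaticNumber hn] at h2
    exact_mod_cast h2
  have himg : Set.range (fun a : Fin n => c (Sum.inl a))
      = ↑((univ : Finset (Fin n)).image (fun a => c (Sum.inl a))) := by
    rw [coe_image, coe_univ, Set.image_univ]
  have hsub : Set.range (fun a : Fin n => c (Sum.inl a)) ⊆ Set.range c := by
    rintro x ⟨a, ha⟩; exact ⟨Sum.inl a, ha⟩
  have hcard : (Set.range (fun a : Fin n => c (Sum.inl a))).ncard = n := by
    rw [himg, Set.ncard_coe_finset, card_image_of_injective _ (cInl_inj hc), card_univ,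
      Fintype.card_fin]
  have heq : Set.range (fun a : Fin n => c (Sum.inl a)) = Set.range c :=
    Set.eq_of_subset_of_ncard_le hsub (by rw [hrange, hcard]) (Set.finite_range c)
  have hv : c v ∈ Set.range c := ⟨v, rfl⟩
  rw [← heq] at hv
  obtain ⟨k, hk⟩ := hv
  exact ⟨k, hk.symm⟩

lemma adj_self (i : Fin n) : (sunGraph n).Adj (Sum.inl i) (Sum.inr i) := Or.inl rfl

lemma adj_succ (hn : 3 ≤ n) (i : Fin n) :
    (sunGraph n).Adj (Sum.inl ⟨((i:ℕ)+1) % n, Nat.mod_lt _ (by omega)⟩) (Sum.inr i) :=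
  Or.inr rfl

lemma count_inl (hn : 3 ≤ n) (hc : IsChromaticColoring (sunGraph n) c) (i : Fin n) :
    (univ.filter (fun j : Fin n => (Hg n c).Adj (Sum.inr i) (Sum.inl j))).card = n - 3 := by
  obtain ⟨k, hk⟩ := exists_inl_color hn hc (Sum.inr i)
  set i1 : Fin n := ⟨((i:ℕ)+1) % n, Nat.mod_lt _ (by omega)⟩ with hi1
  have hpred : ∀ j : Fin n,
      (Hg n c).Adj (Sum.inr i) (Sum.inl j) ↔ j ∉ ({i, i1, k} : Finset (Fin n)) := by
    intro j
    simp only [mem_insert, mem_singleton, not_or]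
    constructor
    · rintro ⟨-, h2, h3⟩
      refine ⟨?_, ?_, ?_⟩
      · rintro rfl; exact h2 (Or.inl rfl)
      · rintro rfl; exact h2 (Or.inr rfl)
      · rintro rfl; exact h3 hk
    · rintro ⟨h1, h2, h3⟩
      refine ⟨Sum.inr_ne_inl, ?_, ?_⟩
      · rintro (h | h)
        · exact h1 (Fin.val_injective h)
        · exact h2 (Fin.val_injective h)
      · rw [hk]
        intro h
        exact h3 (cInl_inj hc h.symm)
  have hii1 : i ≠ i1 := by
    intro h
    have h' : (i : ℕ) % n = ((i:ℕ)+1) % n := by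
      rw [Nat.mod_eq_of_lt i.2]; exact congrArg Fin.val h
    exact mod_ne_mod (by omega) (by omega) h'
  have hik : i ≠ k := by
    intro h
    rw [← h] at hk
    exact hc.1 _ _ (adj_self i) hk.symm
  have hi1k : i1 ≠ k := by
    intro h
    rw [← h] at hk
    exact hc.1 _ _ (adj_succ hn i) hk.symm
  have hcard3 : ({i, i1, k} : Finset (Fin n)).card = 3 :=
    card_eq_three.mpr ⟨i, i1, k, hii1, hik, hi1k, rfl⟩
  rw [filter_congr (fun j _ => by rw [hpred j]), ← sdiff_eq_filter,
    card_sdiff_of_subset (subset_univ _), card_univ, Fintype.card_fin, hcard3]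


lemma filter_card_sum {n : ℕ} (p : Fin n ⊕ Fin n → Prop) [DecidablePred p] :
    ((univ : Finset (Fin n ⊕ Fin n)).filter p).card
      = ((univ : Finset (Fin n)).filter (fun a => p (Sum.inl a))).card
      + ((univ : Finset (Fin n)).filter (fun b => p (Sum.inr b))).card := by
  simp only [card_filter]
  exact Fintype.sum_sum_type _

lemma twice_card (hn : 3 ≤ n) (hc : IsChromaticColoring (sunGraph n) c) :
    2 * (Hg n c).edgeFinset.card
      = 2 * (n * (n - 3)) + ∑ i : Fin n, (univ.filter
          (fun j : Fin n => (Hg n c).Adj (Sum.inr i) (Sum.inr j))).card := by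
  rw [← sum_degrees_eq_twice_card_edges, Fintype.sum_sum_type]
  have hdeg : ∀ v, (Hg n c).degree v
      = ((univ : Finset (Fin n)).filter (fun a : Fin n => (Hg n c).Adj v (Sum.inl a))).card
      + ((univ : Finset (Fin n)).filter (fun b : Fin n => (Hg n c).Adj v (Sum.inr b))).card := by
    intro v
    show ((Hg n c).neighborFinset v).card = _
    rw [neighborFinset_eq_filter, filter_card_sum]
  have hLL : ∀ a : Fin n,
      ((univ : Finset (Fin n)).filter (fun b => (Hg n c).Adj (Sum.inl a) (Sum.inl b))).card = 0 := by
    intro a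
    rw [card_eq_zero, filter_eq_empty_iff]
    rintro b - ⟨h1, h2, h3⟩
    exact h2 fun hab => h1 (congrArg Sum.inl hab)
  have hswap : ∑ a : Fin n,
        ((univ : Finset (Fin n)).filter (fun i => (Hg n c).Adj (Sum.inl a) (Sum.inr i))).card
      = ∑ i : Fin n,
        ((univ : Finset (Fin n)).filter (fun a => (Hg n c).Adj (Sum.inr i) (Sum.inl a))).card := by
    simp only [card_filter]
    rw [Finset.sum_comm]
    refine Finset.sum_congr rfl fun i _ => Finset.sum_congr rfl fun a _ => ?_
    exact if_congr ⟨fun h => h.symm, fun h => h.symm⟩ rfl rfl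
  have hRL : ∀ i : Fin n,
      ((univ : Finset (Fin n)).filter (fun a => (Hg n c).Adj (Sum.inr i) (Sum.inl a))).card
        = n - 3 := count_inl hn hc
  calc (∑ a : Fin n, (Hg n c).degree (Sum.inl a)) + ∑ i : Fin n, (Hg n c).degree (Sum.inr i)
      = (∑ a : Fin n,
          ((univ : Finset (Fin n)).filter (fun i => (Hg n c).Adj (Sum.inl a) (Sum.inr i))).card)
        + ((∑ i : Fin n,
          ((univ : Finset (Fin n)).filter (fun a => (Hg n c).Adj (Sum.inr i) (Sum.inl a))).card)
        + ∑ i : Fin n,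
          ((univ : Finset (Fin n)).filter (fun j => (Hg n c).Adj (Sum.inr i) (Sum.inr j))).card) := by
        simp only [hdeg, hLL, zero_add, Finset.sum_add_distrib]
    _ = 2 * (n * (n - 3)) + ∑ i : Fin n,
          ((univ : Finset (Fin n)).filter (fun j => (Hg n c).Adj (Sum.inr i) (Sum.inr j))).card := by
        rw [hswap]
        simp only [hRL, Finset.sum_const, card_univ, Fintype.card_fin, smul_eq_mul]
        ring


lemma mod_add_inj {n i j k : ℕ} (hi : i < n) (hj : j < n) (h : (i+k)%n = (j+k)%n) : i = j := by
  by_contra hne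
  rcases Nat.lt_or_ge i j with h'|h'
  · exact mod_ne_mod (by omega) (by omega) h
  · exact mod_ne_mod (by omega) (by omega) h.symm

lemma d_le (i : Fin n) :
    ((univ : Finset (Fin n)).filter (fun j => (Hg n c).Adj (Sum.inr i) (Sum.inr j))).card
      ≤ n - 1 := by
  have hsub : (univ : Finset (Fin n)).filter (fun j => (Hg n c).Adj (Sum.inr i) (Sum.inr j))
      ⊆ univ.erase i := by
    intro j hj
    rw [mem_filter] at hj
    exact mem_erase.mpr ⟨fun h => hj.2.1 (congrArg Sum.inr h.symm), mem_univ j⟩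
  calc _ ≤ (univ.erase i).card := card_le_card hsub
    _ = n - 1 := by rw [card_erase_of_mem (mem_univ i), card_univ, Fintype.card_fin]

lemma c0_chromatic (hn : 3 ≤ n) : IsChromaticColoring (sunGraph n) (c0 n) := by
  refine ⟨c0_proper hn, ?_⟩
  rw [sun_chromaticNumber hn]
  have hr : Set.range (c0 n) = ↑(Finset.range n) := by
    ext m
    simp only [Set.mem_range, coe_range, Set.mem_Iio]
    constructor
    · rintro ⟨v, rfl⟩
      cases v with
      | inl a => exact a.2
      | inr i => exact Nat.mod_lt _ (by omega)
    · intro hm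
      exact ⟨Sum.inl ⟨m, hm⟩, rfl⟩
  rw [hr, Set.ncard_coe_finset, card_range]

lemma c0_d (hn : 3 ≤ n) (i : Fin n) :
    ((univ : Finset (Fin n)).filter (fun j => (Hg n (c0 n)).Adj (Sum.inr i) (Sum.inr j))).card
      = n - 1 := by
  have hp : ∀ j : Fin n, (Hg n (c0 n)).Adj (Sum.inr i) (Sum.inr j) ↔ j ≠ i := by
    intro j
    constructor
    · rintro ⟨h1, -, -⟩
      exact fun h => h1 (congrArg Sum.inr h.symm)
    · intro hj
      refine ⟨fun h => hj (Sum.inr_injective h).symm, fun h => h, ?_⟩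
      show ((i : ℕ) + 2) % n ≠ ((j : ℕ) + 2) % n
      intro h
      exact hj (Fin.val_injective (mod_add_inj i.2 j.2 h).symm)
  rw [filter_congr (fun j _ => by rw [hp j]), filter_ne', card_erase_of_mem (mem_univ i),
    card_univ, Fintype.card_fin]

end SunAux

open Finset in
/-- For every $n ≥ 3$, $ζ(S_n) = n(n-1)/2 + n(n-3) = n(3n-7)/2$. -/
theorem zeta_sun (n : ℕ) (hn : 3 ≤ n) :
    zeta (sunGraph n) = n * (n - 1) / 2 + n * (n - 3) ∧
    zeta (sunGraph n) = n * (3 * n - 7) / 2 := by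
  obtain ⟨t, ht⟩ : ∃ t, n * (n - 1) = 2 * t := by
    rcases Nat.even_or_odd n with ⟨m, hm⟩ | ⟨m, hm⟩
    · exact ⟨m * (n - 1), by rw [hm]; ring⟩
    · exact ⟨n * m, by rw [show n - 1 = 2 * m by omega]; ring⟩
  have hub : ∀ m ∈ {m | ∃ c : Fin n ⊕ Fin n → ℕ,
      IsChromaticColoring (sunGraph n) c ∧ m = (completionEdges (sunGraph n) c).ncard},
      m ≤ n * (n - 1) / 2 + n * (n - 3) := by
    rintro m ⟨c, hcc, rfl⟩
    rw [completionEdges_ncard]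
    have h2 := twice_card hn hcc
    have hD : (∑ i : Fin n, ((univ : Finset (Fin n)).filter
        (fun j => (Hg n c).Adj (Sum.inr i) (Sum.inr j))).card) ≤ n * (n - 1) := by
      calc _ ≤ ∑ _i : Fin n, (n - 1) := Finset.sum_le_sum fun i _ => d_le i
        _ = n * (n - 1) := by simp [mul_comm]
    set E := (Hg n c).edgeFinset.card
    set D := ∑ i : Fin n, ((univ : Finset (Fin n)).filter
        (fun j => (Hg n c).Adj (Sum.inr i) (Sum.inr j))).card
    set A := n * (n - 1)
    set B := n * (n - 3)
    omega
  have hmem : (n * (n - 1) / 2 + n * (n - 3)) ∈ {m | ∃ c : Fin n ⊕ Fin n → ℕ,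
      IsChromaticColoring (sunGraph n) c ∧ m = (completionEdges (sunGraph n) c).ncard} := by
    refine ⟨c0 n, c0_chromatic hn, ?_⟩
    rw [completionEdges_ncard]
    have h2 := twice_card hn (c0_chromatic hn)
    have hD : (∑ i : Fin n, ((univ : Finset (Fin n)).filter
        (fun j => (Hg n (c0 n)).Adj (Sum.inr i) (Sum.inr j))).card) = n * (n - 1) := by
      calc _ = ∑ _i : Fin n, (n - 1) := Finset.sum_congr rfl fun i _ => c0_d hn i
        _ = n * (n - 1) := by simp [mul_comm]
    rw [hD] at h2
    set E := (Hg n (c0 n)).edgeFinset.card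
    set A := n * (n - 1)
    set B := n * (n - 3)
    omega
  have hz : zeta (sunGraph n) = n * (n - 1) / 2 + n * (n - 3) :=
    le_antisymm (csSup_le ⟨_, hmem⟩ hub) (le_csSup ⟨_, hub⟩ hmem)
  refine ⟨hz, ?_⟩
  rw [hz]
  have h37 : n * (3 * n - 7) = n * (n - 1) + 2 * (n * (n - 3)) := by
    rw [show 3 * n - 7 = (n - 1) + 2 * (n - 3) by omega]; ring
  set A := n * (n - 1)
  set B := n * (n - 3)
  set C := n * (3 * n - 7)
  omega
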